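/- With the notation of the fiber-equidistribution theorem: given ε > 0 and a measurable N ⊆ W with m(N) < ε²/2, there exist a measurable K ⊆ W with m(W ∖ K) < ε and a rank n₀ such that for all c ∈ K and n ≥ n₀, the conditional expectation E_{m|W}[1_N | Q_{W,n}](c) < ε. -/

import Mathlib

open MeasureTheory

/-- **Non-accumulation of fiber pieces in small sets.**  With the notation of the
fiber-equidistribution theorem: `(E, ℰ, m)` σ-finite, `T` measure-preserving, `W` of
finite positive measure, `Q_{W,n}` the trace of `T^{−n}(ℰ)` on `W`.  Given `ε > 0` and a
measurable `N ⊆ W` with `m(N) < ε²/2`, there exist a measurable `K ⊆ W` with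
`m(W ∖ K) < ε` and a rank `n₀` such that for all `c ∈ K` and `n ≥ n₀`, the conditional
expectation satisfies `E_{m|W}[1_N | Q_{W,n}](c) < ε`. -/
theorem stmt12 {E : Type*} [inst : MeasurableSpace E] (m : Measure E) [SigmaFinite m]
    (T : E → E) (hT : MeasurePreserving T m m)
    (W : Set E) (hW : MeasurableSet W) (hW0 : m W ≠ 0) (hWfin : m W ≠ ⊤)
    (ε : ℝ) (hε : 0 < ε)
    (N : Set E) (hN : MeasurableSet N) (hNW : N ⊆ W)
    (hNsmall : m N < ENNReal.ofReal (ε ^ 2 / 2)) :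
    ∃ K : Set E, MeasurableSet K ∧ K ⊆ W ∧ m (W \ K) < ENNReal.ofReal ε ∧
      ∃ n₀ : ℕ, ∀ c ∈ K, ∀ n ≥ n₀,
        ((m.restrict W)[Set.indicator N (fun _ => (1 : ℝ)) |
            MeasurableSpace.comap (T^[n]) inst]) c < ε := by
  set μ := m.restrict W with hμ
  haveI : IsFiniteMeasure μ := ⟨by rw [hμ, Measure.restrict_apply_univ]; exact hWfin.lt_top⟩
  have hTmeas : ∀ n : ℕ, Measurable (T^[n]) := fun n => hT.measurable.iterate n
  set 𝔪 : ℕ → MeasurableSpace E := fun n => MeasurableSpace.comap (T^[n]) inst with h𝔪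
  have hle : ∀ n, 𝔪 n ≤ inst := by
    rintro n s ⟨t, ht, rfl⟩
    exact hTmeas n ht
  -- the σ-algebras are decreasing
  have hmono : ∀ M j : ℕ, 𝔪 (M + j) ≤ 𝔪 M := by
    rintro M j s ⟨t, ht, rfl⟩
    refine ⟨(T^[j]) ⁻¹' t, hTmeas j ht, ?_⟩
    rw [← Set.preimage_comp, ← Function.iterate_add, add_comm]
  haveI : ∀ n, SigmaFinite (μ.trim (hle n)) := fun n => inferInstance
  set g : E → ℝ := Set.indicator N (fun _ => (1 : ℝ)) with hg
  have hgint : Integrable g μ := (integrable_const (1 : ℝ)).indicator hN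
  have hgnn : 0 ≤ g := fun x => Set.indicator_nonneg (fun _ _ => zero_le_one) x
  set f : ℕ → E → ℝ := fun n => μ[g | 𝔪 n] with hf
  have hfint : ∀ n, Integrable (f n) μ := fun n => integrable_condExp
  -- bad sets
  set A : ℕ → Set E := fun n => {x | ε ≤ f n x} with hA
  have hA𝔪 : ∀ n, MeasurableSet[𝔪 n] (A n) := fun n =>
    measurableSet_le measurable_const (stronglyMeasurable_condExp.measurable)
  have hAmeas : ∀ n, MeasurableSet (A n) := fun n => hle n _ (hA𝔪 n)
  -- maximal-type inequality via last-visit decomposition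
  have key : ∀ p M : ℕ, ε * (μ (⋃ n ∈ Finset.Ico M (M + p), A n)).toReal ≤
      ∫ x in (⋃ n ∈ Finset.Ico M (M + p), A n), g x ∂μ := by
    intro p
    induction p with
    | zero =>
      intro M
      simp
    | succ p ih =>
      intro M
      have hset : (⋃ n ∈ Finset.Ico M (M + (p + 1)), A n)
          = A M ∪ ⋃ n ∈ Finset.Ico (M + 1) (M + 1 + p), A n := by
        ext x
        simp only [Set.mem_iUnion, Finset.mem_Ico, Set.mem_union]
        constructor
        · rintro ⟨n, hn, hx⟩
          rcases eq_or_lt_of_le hn.1 with h | h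
          · exact Or.inl (h ▸ hx)
          · exact Or.inr ⟨n, ⟨h, by omega⟩, hx⟩
        · rintro (hx | ⟨n, hn, hx⟩)
          · exact ⟨M, by omega, hx⟩
          · exact ⟨n, by omega, hx⟩
      set U := ⋃ n ∈ Finset.Ico (M + 1) (M + 1 + p), A n with hU
      have hU𝔪 : MeasurableSet[𝔪 (M + 1)] U := by
        refine Finset.measurableSet_biUnion _ (fun k hk => ?_)
        rw [Finset.mem_Ico] at hk
        obtain ⟨j, rfl⟩ := Nat.exists_eq_add_of_le hk.1
        exact hmono (M + 1) j _ (hA𝔪 _)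
      have hU𝔪M : MeasurableSet[𝔪 M] U := hmono M 1 _ hU𝔪
      have hUmeas : MeasurableSet U := hle M _ hU𝔪M
      set s := A M \ U with hs
      have hs𝔪 : MeasurableSet[𝔪 M] s := (hA𝔪 M).diff hU𝔪M
      have hsmeas : MeasurableSet s := hle M _ hs𝔪
      have hdisj : Disjoint s U := Set.disjoint_sdiff_left
      have hsplit : (⋃ n ∈ Finset.Ico M (M + (p + 1)), A n) = s ∪ U := by
        rw [hset]; exact (Set.diff_union_self).symm
      rw [hsplit]
      have hmeasadd : μ (s ∪ U) = μ s + μ U := measure_union hdisj hUmeas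
      have hintadd : ∫ x in s ∪ U, g x ∂μ = (∫ x in s, g x ∂μ) + ∫ x in U, g x ∂μ :=
        setIntegral_union hdisj hUmeas hgint.integrableOn hgint.integrableOn
      -- bound on s
      have h1 : ε * (μ s).toReal ≤ ∫ x in s, f M x ∂μ := by
        refine setIntegral_ge_of_const_le_real hsmeas (measure_ne_top μ s) ?_
          (hfint M).integrableOn
        intro x hx
        exact hx.1
      have h2 : ∫ x in s, f M x ∂μ = ∫ x in s, g x ∂μ :=
        setIntegral_condExp (hle M) hgint hs𝔪
      have h3 : ε * (μ U).toReal ≤ ∫ x in U, g x ∂μ := by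
        have := ih (M + 1)
        rwa [← hU] at this
      rw [hmeasadd, hintadd, ENNReal.toReal_add (measure_ne_top μ s) (measure_ne_top μ U),
        mul_add]
      exact add_le_add (h1.trans_eq h2) h3
  -- total mass bound
  have hμN : μ N = m N := by
    rw [hμ, Measure.restrict_apply hN, Set.inter_eq_self_of_subset_left hNW]
  have hμNlt : (μ N).toReal < ε ^ 2 / 2 := by
    rw [hμN]
    rw [ENNReal.lt_ofReal_iff_toReal_lt (ne_top_of_lt hNsmall)] at hNsmall
    exact hNsmall
  have hCbound : ∀ p : ℕ, μ (⋃ n ∈ Finset.Ico 0 p, A n) ≤ ENNReal.ofReal (ε / 2) := by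
    intro p
    have h1 := key p 0
    rw [zero_add] at h1
    have h2 : ∫ x in (⋃ n ∈ Finset.Ico 0 p, A n), g x ∂μ ≤ ∫ x, g x ∂μ :=
      setIntegral_le_integral hgint (Filter.Eventually.of_forall hgnn)
    have h3 : ∫ x, g x ∂μ = (μ N).toReal := integral_indicator_one hN
    have h4 : ε * (μ (⋃ n ∈ Finset.Ico 0 p, A n)).toReal < ε ^ 2 / 2 :=
      lt_of_le_of_lt (h1.trans (h2.trans_eq h3)) hμNlt
    have h5 : (μ (⋃ n ∈ Finset.Ico 0 p, A n)).toReal ≤ ε / 2 := by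
      nlinarith [h4]
    rw [← ENNReal.ofReal_toReal (measure_ne_top μ _)]
    exact ENNReal.ofReal_le_ofReal h5
  set B := ⋃ n, A n with hB
  have hBmeas : MeasurableSet B := MeasurableSet.iUnion hAmeas
  have hBeq : B = ⋃ p, ⋃ n ∈ Finset.Ico 0 p, A n := by
    ext x
    simp only [hB, Set.mem_iUnion, Finset.mem_Ico]
    constructor
    · rintro ⟨n, hx⟩; exact ⟨n + 1, n, ⟨Nat.zero_le n, Nat.lt_succ_self n⟩, hx⟩
    · rintro ⟨p, n, _, hx⟩; exact ⟨n, hx⟩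
  have hBle : μ B ≤ ENNReal.ofReal (ε / 2) := by
    rw [hBeq]
    have hmonoC : Monotone (fun p => ⋃ n ∈ Finset.Ico 0 p, A n) := fun p q hpq =>
      Set.biUnion_subset_biUnion_left (Finset.Ico_subset_Ico le_rfl hpq)
    exact (Directed.measure_iUnion hmonoC.directed_le).le.trans (iSup_le hCbound)
  refine ⟨W \ B, hW.diff hBmeas, Set.diff_subset, ?_, 0, ?_⟩
  · have : W \ (W \ B) = W ∩ B := Set.diff_diff_right_self W B
    rw [this]
    have : m (W ∩ B) = μ B := by
      rw [hμ, Measure.restrict_apply hBmeas, Set.inter_comm]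
    rw [this]
    exact lt_of_le_of_lt hBle (ENNReal.ofReal_lt_ofReal_iff hε |>.mpr (by linarith))
  · intro c hc n _
    have hcB : c ∉ B := hc.2
    have : c ∉ A n := fun h => hcB (Set.mem_iUnion.mpr ⟨n, h⟩)
    simpa [hA, not_le] using this
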